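/- Let m ≥ 2 be an integer and p, q integers with 1 ≤ p ≤ m−1, 1 ≤ q ≤ m+1 and p ≡ q (mod 2). Set p' = m−p, q' = m+2−q and M = max(pq, p'q')/2. Then h^m_{p,q} + M > m²/8. -/
import Mathlib


/-- `h^m_{p,q} = (((m+2)p − mq)² − 4) / (8m(m+2))`. -/
noncomputable def hPQ (m : ℝ) (p q : ℤ) : ℝ :=
  (((m + 2) * (p : ℝ) - m * (q : ℝ)) ^ 2 - 4) / (8 * m * (m + 2))

/-- For `m ≥ 2`, `1 ≤ p ≤ m−1`, `1 ≤ q ≤ m+1`, `p ≡ q (mod 2)`, `p' = m−p`, `q' = m+2−q`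
and `M = max(pq, p'q')/2`, one has `h^m_{p,q} + M > m²/8`. -/
theorem h_plus_M_gt (m : ℤ) (hm : 2 ≤ m) (p q : ℤ)
    (hp1 : 1 ≤ p) (hp2 : p ≤ m - 1) (hq1 : 1 ≤ q) (hq2 : q ≤ m + 1)
    (hpar : p % 2 = q % 2) :
    (m : ℝ) ^ 2 / 8 <
      hPQ (m : ℝ) p q + ((max (p * q) ((m - p) * (m + 2 - q)) : ℤ) : ℝ) / 2 := by
  have hM1 : p * q ≤ max (p * q) ((m - p) * (m + 2 - q)) := le_max_left _ _
  have hM2 : (m - p) * (m + 2 - q) ≤ max (p * q) ((m - p) * (m + 2 - q)) := le_max_right _ _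
  have hmp : (0:ℤ) < m * (m + 2) := by nlinarith
  have key : m ^ 3 * (m + 2) + 4 <
      ((m + 2) * p - m * q) ^ 2
        + 4 * m * (m + 2) * max (p * q) ((m - p) * (m + 2 - q)) := by
    rcases le_total ((m + 2) * p + m * q) (m * (m + 2)) with h | h
    · have hT : m * (m + 2) ≤ (m + 2) * (m - p) + m * (m + 2 - q) := by nlinarith
      have hTsq : (m * (m + 2)) * (m * (m + 2)) ≤
          ((m + 2) * (m - p) + m * (m + 2 - q)) * ((m + 2) * (m - p) + m * (m + 2 - q)) :=
        mul_le_mul hT hT (le_of_lt hmp) (le_trans (le_of_lt hmp) hT)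
      nlinarith [mul_le_mul_of_nonneg_left hM2 (le_of_lt (by positivity : (0:ℤ) < 4 * (m * (m + 2))))]
    · have hT : m * (m + 2) ≤ (m + 2) * p + m * q := h
      have hTsq : (m * (m + 2)) * (m * (m + 2)) ≤
          ((m + 2) * p + m * q) * ((m + 2) * p + m * q) :=
        mul_le_mul hT hT (le_of_lt hmp) (le_trans (le_of_lt hmp) hT)
      nlinarith [mul_le_mul_of_nonneg_left hM1 (le_of_lt (by positivity : (0:ℤ) < 4 * (m * (m + 2))))]
  have hmR : (2:ℝ) ≤ (m:ℝ) := by exact_mod_cast hm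
  have hden : (0:ℝ) < 8 * (m:ℝ) * ((m:ℝ) + 2) := by nlinarith
  have keyR : ((m:ℝ)) ^ 3 * ((m:ℝ) + 2) + 4 <
      (((m:ℝ) + 2) * (p:ℝ) - (m:ℝ) * (q:ℝ)) ^ 2
        + 4 * (m:ℝ) * ((m:ℝ) + 2) * ((max (p * q) ((m - p) * (m + 2 - q)) : ℤ) : ℝ) := by
    exact_mod_cast key
  rw [hPQ]
  rw [div_add_div _ _ (ne_of_gt hden) (by norm_num : (2:ℝ) ≠ 0),
    div_lt_div_iff₀ (by norm_num : (0:ℝ) < 8) (by positivity)]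
  nlinarith [keyR]
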